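/- Let n be a nonzero integer. The functions y ↦ √y·I_{7/2}(2π|n|y) and y ↦ √y·K_{7/2}(2π|n|y) both satisfy the homogeneous ordinary differential equation y²·g''(y) = (12 + 4π²n²y²)·g(y) on (0,∞), and every twice differentiable solution g : (0,∞) → ℂ of this equation is a unique ℂ-linear combination a·√y·I_{7/2}(2π|n|y) + b·√y·K_{7/2}(2π|n|y). For n = 0, every twice differentiable solution of y²·g''(y) = 12·g(y) on (0,∞) is a unique ℂ-linear combination a·y⁴ + b·y^{−3}. -/

import Mathlib

open Real Set
open scoped NNReal



/-- The polynomial `P(x) = 1 + 6/x + 15/x² + 15/x³`. -/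
noncomputable def Pb (x : ℝ) : ℝ := 1 + 6 / x + 15 / x ^ 2 + 15 / x ^ 3

/-- Modified Bessel function `K_{7/2}(x) = √(π/(2x)) P(x) e^{−x}`. -/
noncomputable def K7half (x : ℝ) : ℝ := Real.sqrt (π / (2 * x)) * Pb x * Real.exp (-x)

/-- Modified Bessel function `I_{7/2}(x) = (1/√(2πx))(P(−x)e^x + P(x)e^{−x})`. -/
noncomputable def I7half (x : ℝ) : ℝ :=
  1 / Real.sqrt (2 * π * x) * (Pb (-x) * Real.exp x + Pb x * Real.exp (-x))


noncomputable def Pd (x : ℝ) : ℝ := -6 / x ^ 2 - 30 / x ^ 3 - 45 / x ^ 4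
noncomputable def Pdd (x : ℝ) : ℝ := 12 / x ^ 3 + 90 / x ^ 4 + 180 / x ^ 5

lemma hasDerivAt_Pb {x : ℝ} (hx : x ≠ 0) : HasDerivAt Pb (Pd x) x := by
  have h := (((hasDerivAt_const x (1:ℝ)).add
      (((hasDerivAt_const x (6:ℝ)).div (hasDerivAt_id x) hx))).add
      ((hasDerivAt_const x (15:ℝ)).div (hasDerivAt_pow 2 x) (pow_ne_zero 2 hx))).add
      ((hasDerivAt_const x (15:ℝ)).div (hasDerivAt_pow 3 x) (pow_ne_zero 3 hx))
  have e : Pd x = 0 + (0 * id x - 6 * 1) / id x ^ 2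
      + (0 * x ^ 2 - 15 * (↑2 * x ^ (2 - 1))) / (x ^ 2) ^ 2
      + (0 * x ^ 3 - 15 * (↑3 * x ^ (3 - 1))) / (x ^ 3) ^ 2 := by
    unfold Pd; simp only [id_eq]; field_simp; ring
  rw [e]; exact h

lemma hasDerivAt_Pd {x : ℝ} (hx : x ≠ 0) : HasDerivAt Pd (Pdd x) x := by
  have h := (((hasDerivAt_const x (-6:ℝ)).div (hasDerivAt_pow 2 x) (pow_ne_zero 2 hx)).sub
      ((hasDerivAt_const x (30:ℝ)).div (hasDerivAt_pow 3 x) (pow_ne_zero 3 hx))).sub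
      ((hasDerivAt_const x (45:ℝ)).div (hasDerivAt_pow 4 x) (pow_ne_zero 4 hx))
  have e : Pdd x = (0 * x ^ 2 - -6 * (↑2 * x ^ (2 - 1))) / (x ^ 2) ^ 2
      - (0 * x ^ 3 - 30 * (↑3 * x ^ (3 - 1))) / (x ^ 3) ^ 2
      - (0 * x ^ 4 - 45 * (↑4 * x ^ (4 - 1))) / (x ^ 4) ^ 2 := by
    unfold Pdd; field_simp; ring
  rw [e]; exact h

noncomputable def Gp (c t : ℝ) : ℝ := Pb (c * t) * Real.exp (-(c * t))
noncomputable def Gp1 (c t : ℝ) : ℝ := c * ((Pd (c * t) - Pb (c * t)) * Real.exp (-(c * t)))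
noncomputable def Gp2 (c t : ℝ) : ℝ :=
  c ^ 2 * ((Pdd (c * t) - 2 * Pd (c * t) + Pb (c * t)) * Real.exp (-(c * t)))

lemma hasDerivAt_ct (c t : ℝ) : HasDerivAt (fun t : ℝ => c * t) c t := by
  simpa using (hasDerivAt_id t).const_mul c

lemma hasDerivAt_exp_neg_ct (c t : ℝ) :
    HasDerivAt (fun t : ℝ => Real.exp (-(c * t))) (-c * Real.exp (-(c * t))) t := by
  have := ((hasDerivAt_ct c t).neg).exp
  simpa [mul_comm] using this

lemma hasDerivAt_Gp {c t : ℝ} (h : c * t ≠ 0) : HasDerivAt (Gp c) (Gp1 c t) t := by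
  have hPb : HasDerivAt (fun t : ℝ => Pb (c * t)) (Pd (c * t) * c) t :=
    (hasDerivAt_Pb h).comp t (hasDerivAt_ct c t)
  have h2 := hPb.mul (hasDerivAt_exp_neg_ct c t)
  have e : Gp1 c t = Pd (c * t) * c * Real.exp (-(c * t))
      + Pb (c * t) * (-c * Real.exp (-(c * t))) := by unfold Gp1; ring
  rw [show Gp c = fun t => Pb (c * t) * Real.exp (-(c * t)) from rfl, e]; exact h2

lemma hasDerivAt_Gp1 {c t : ℝ} (h : c * t ≠ 0) : HasDerivAt (Gp1 c) (Gp2 c t) t := by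
  have hP : HasDerivAt (fun t : ℝ => Pd (c * t) - Pb (c * t))
      ((Pdd (c * t)) * c - (Pd (c * t)) * c) t :=
    (((hasDerivAt_Pd h).comp t (hasDerivAt_ct c t))).sub
      ((hasDerivAt_Pb h).comp t (hasDerivAt_ct c t))
  have h2 := (hP.mul (hasDerivAt_exp_neg_ct c t)).const_mul c
  have e : Gp2 c t = c * ((Pdd (c * t) * c - Pd (c * t) * c) * Real.exp (-(c * t))
      + (Pd (c * t) - Pb (c * t)) * (-c * Real.exp (-(c * t)))) := by unfold Gp2; ring
  rw [show Gp1 c = fun t => c * ((Pd (c * t) - Pb (c * t)) * Real.exp (-(c * t))) from rfl, e]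
  exact h2

lemma Gp_ode {c t : ℝ} (hc : c ≠ 0) (ht : t ≠ 0) : Gp2 c t = (12 / t ^ 2 + c ^ 2) * Gp c t := by
  unfold Gp2 Gp Pb Pd Pdd
  have h : c * t ≠ 0 := mul_ne_zero hc ht
  field_simp
  ring

lemma Gp_wron {c : ℝ} (hc : c ≠ 0) {t : ℝ} (ht : t ≠ 0) :
    Gp (-c) t * Gp1 c t - Gp1 (-c) t * Gp c t = -(2 * c) := by
  unfold Gp Gp1
  have h : c * t ≠ 0 := mul_ne_zero hc ht
  have e1 : -c * t = -(c * t) := by ring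
  rw [e1, neg_neg, Real.exp_neg]
  have hE : Real.exp (c * t) ≠ 0 := Real.exp_ne_zero _
  generalize Real.exp (c * t) = E at hE ⊢
  generalize hxe : c * t = x at h ⊢
  have hnx : -x ≠ 0 := neg_ne_zero.mpr h
  have ePb : ∀ z : ℝ, z ≠ 0 → Pb z = (z ^ 3 + 6 * z ^ 2 + 15 * z + 15) / z ^ 3 := by
    intro z hz; unfold Pb; field_simp
  have ePd : ∀ z : ℝ, z ≠ 0 → Pd z = -(6 * z ^ 2 + 30 * z + 45) / z ^ 4 := by
    intro z hz; unfold Pd; field_simp; ring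
  rw [ePb x h, ePb (-x) hnx, ePd x h, ePd (-x) hnx]
  field_simp
  ring

lemma vanish (c2 : ℝ) (hc2 : 0 ≤ c2) (h : ℝ → ℂ)
    (hd1 : ∀ y : ℝ, 0 < y → DifferentiableAt ℝ h y)
    (hd2 : ∀ y : ℝ, 0 < y → DifferentiableAt ℝ (deriv h) y)
    (hode : ∀ y : ℝ, 0 < y → deriv (deriv h) y = ((12 / y ^ 2 + c2 : ℝ) : ℂ) * h y)
    (h1 : h 1 = 0) (h1' : deriv h 1 = 0) : ∀ y : ℝ, 0 < y → h y = 0 := by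
  intro y hy
  set a : ℝ := min y 1 / 2 with ha_def
  have ha : 0 < a := by positivity
  set b : ℝ := max y 1 + 1 with hb_def
  set μ : ℝ → ℝ := fun t => 12 / max t a ^ 2 + c2 with hμ
  set v : ℝ → ℂ × ℂ → ℂ × ℂ := fun t z => (z.2, (μ t : ℂ) * z.1) with hv_def
  have hμ_nonneg : ∀ t, 0 ≤ μ t := by
    intro t
    have : (0:ℝ) < max t a := lt_of_lt_of_le ha (le_max_right _ _)
    positivity
  have hμ_le : ∀ t, μ t ≤ 12 / a ^ 2 + c2 := by
    intro t
    have h1 : (0:ℝ) < max t a := lt_of_lt_of_le ha (le_max_right _ _)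
    have : a ^ 2 ≤ max t a ^ 2 := by
      apply pow_le_pow_left₀ ha.le (le_max_right _ _)
    have : 12 / max t a ^ 2 ≤ 12 / a ^ 2 :=
      div_le_div_of_nonneg_left (by norm_num) (by positivity) this
    simp only [hμ]; linarith
  set K : ℝ≥0 := ⟨12 / a ^ 2 + c2 + 1, by positivity⟩ with hK
  have hlip : ∀ t, LipschitzWith K (v t) := by
    intro t
    have l2 : LipschitzWith ‖(μ t : ℂ)‖₊ (fun z : ℂ × ℂ => (μ t : ℂ) * z.1) := by
      have := (lipschitzWith_smul (α := ℂ) (β := ℂ) ((μ t : ℂ))).comp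
        (LipschitzWith.prod_fst (α := ℂ) (β := ℂ))
      rw [mul_one] at this; exact this
    have l := (LipschitzWith.prod_snd (α := ℂ) (β := ℂ)).prodMk l2
    apply l.weaken
    apply max_le
    · rw [← NNReal.coe_le_coe]
      have : (0:ℝ) ≤ 12 / a ^ 2 + c2 := by positivity
      simp only [hK, NNReal.coe_one, NNReal.coe_mk]; exact (by linarith : (1:ℝ) ≤ 12 / a ^ 2 + c2 + 1)
    · rw [← NNReal.coe_le_coe]
      simp only [hK, coe_nnnorm, NNReal.coe_mk, Complex.norm_real]
      rw [Real.norm_eq_abs, abs_of_nonneg (hμ_nonneg t)]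
      have := hμ_le t; exact (by linarith : μ t ≤ 12 / a ^ 2 + c2 + 1)
  set f : ℝ → ℂ × ℂ := fun t => (h t, deriv h t) with hf_def
  have hmem : ∀ t ∈ Ioo a b, 0 < t := fun t ht => lt_trans ha ht.1
  have hODE : ∀ t ∈ Ioo a b, HasDerivAt f (v t (f t)) t ∧ f t ∈ (univ : Set (ℂ × ℂ)) := by
    intro t ht
    refine ⟨?_, trivial⟩
    have ht0 : 0 < t := hmem t ht
    have hmax : max t a = t := max_eq_left (le_of_lt ht.1)
    have hder : HasDerivAt f (deriv h t, deriv (deriv h) t) t :=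
      ((hd1 t ht0).hasDerivAt).prodMk ((hd2 t ht0).hasDerivAt)
    have : v t (f t) = (deriv h t, deriv (deriv h) t) := by
      simp only [hv_def, hf_def, hμ]
      rw [hmax, hode t ht0]
    rw [this]; exact hder
  have hzero : ∀ t ∈ Ioo a b, HasDerivAt (fun _ : ℝ => ((0:ℂ),(0:ℂ))) (v t ((0:ℂ),(0:ℂ))) t ∧
      ((0:ℂ),(0:ℂ)) ∈ (univ : Set (ℂ × ℂ)) := by
    intro t _
    refine ⟨?_, trivial⟩
    have : v t ((0:ℂ),(0:ℂ)) = ((0:ℂ),(0:ℂ)) := by simp [hv_def]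
    rw [this]; exact hasDerivAt_const t _
  have h1mem : (1:ℝ) ∈ Ioo a b := by
    constructor
    · have : min y 1 ≤ 1 := min_le_right _ _
      simp only [ha_def]; linarith
    · have : (1:ℝ) ≤ max y 1 := le_max_right _ _
      simp only [hb_def]; linarith
  have hymem : y ∈ Ioo a b := by
    constructor
    · have : min y 1 ≤ y := min_le_left _ _
      simp only [ha_def]; linarith
    · have : y ≤ max y 1 := le_max_left _ _
      simp only [hb_def]; linarith
  have heq1 : f 1 = (fun _ : ℝ => ((0:ℂ),(0:ℂ))) 1 := by
    simp only [hf_def, h1, h1']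
  have := ODE_solution_unique_of_mem_Ioo (fun t _ => (hlip t).lipschitzOnWith)
    h1mem hODE hzero heq1 hymem
  have h2 := (Prod.ext_iff.mp this).1
  simpa [hf_def] using h2

lemma rep (c2 : ℝ) (hc2 : 0 ≤ c2) (u v u1 v1 u2 v2 : ℝ → ℝ)
    (hu : ∀ y : ℝ, 0 < y → HasDerivAt u (u1 y) y)
    (hu1 : ∀ y : ℝ, 0 < y → HasDerivAt u1 (u2 y) y)
    (hv : ∀ y : ℝ, 0 < y → HasDerivAt v (v1 y) y)
    (hv1 : ∀ y : ℝ, 0 < y → HasDerivAt v1 (v2 y) y)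
    (huo : ∀ y : ℝ, 0 < y → u2 y = (12 / y ^ 2 + c2) * u y)
    (hvo : ∀ y : ℝ, 0 < y → v2 y = (12 / y ^ 2 + c2) * v y)
    (hW : u 1 * v1 1 - u1 1 * v 1 ≠ 0)
    (g : ℝ → ℂ)
    (hg1 : ∀ y : ℝ, 0 < y → DifferentiableAt ℝ g y)
    (hg2 : ∀ y : ℝ, 0 < y → DifferentiableAt ℝ (deriv g) y)
    (hode : ∀ y : ℝ, 0 < y → deriv (deriv g) y = ((12 / y ^ 2 + c2 : ℝ) : ℂ) * g y) :
    ∃! ab : ℂ × ℂ, ∀ y : ℝ, 0 < y → g y = ab.1 * (u y : ℂ) + ab.2 * (v y : ℂ) := by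
  have hWC : ((u 1 * v1 1 - u1 1 * v 1 : ℝ) : ℂ) ≠ 0 := Complex.ofReal_ne_zero.mpr hW
  obtain ⟨A, hA⟩ : ∃ z : ℂ, z = (g 1 * (v1 1 : ℂ) - deriv g 1 * (v 1 : ℂ)) /
      ((u 1 * v1 1 - u1 1 * v 1 : ℝ) : ℂ) := ⟨_, rfl⟩
  obtain ⟨B, hB⟩ : ∃ z : ℂ, z = (deriv g 1 * (u 1 : ℂ) - g 1 * (u1 1 : ℂ)) /
      ((u 1 * v1 1 - u1 1 * v 1 : ℝ) : ℂ) := ⟨_, rfl⟩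
  set φ : ℝ → ℂ := fun y => A * (u y : ℂ) + B * (v y : ℂ) with hφ
  set φ1 : ℝ → ℂ := fun y => A * (u1 y : ℂ) + B * (v1 y : ℂ) with hφ1
  set φ2 : ℝ → ℂ := fun y => A * (u2 y : ℂ) + B * (v2 y : ℂ) with hφ2
  have hdφ : ∀ y : ℝ, 0 < y → HasDerivAt φ (φ1 y) y := fun y hy =>
    (((hu y hy).ofReal_comp).const_mul A).add (((hv y hy).ofReal_comp).const_mul B)
  have hdφ1 : ∀ y : ℝ, 0 < y → HasDerivAt φ1 (φ2 y) y := fun y hy =>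
    (((hu1 y hy).ofReal_comp).const_mul A).add (((hv1 y hy).ofReal_comp).const_mul B)
  set h : ℝ → ℂ := fun y => g y - φ y with hh
  have hd1 : ∀ y : ℝ, 0 < y → DifferentiableAt ℝ h y := fun y hy =>
    (hg1 y hy).sub (hdφ y hy).differentiableAt
  have hD : ∀ y : ℝ, 0 < y → deriv h y = deriv g y - φ1 y := by
    intro y hy
    rw [hh, deriv_fun_sub (hg1 y hy) (hdφ y hy).differentiableAt, (hdφ y hy).deriv]
  have hev : ∀ y : ℝ, 0 < y → deriv h =ᶠ[nhds y] fun t => deriv g t - φ1 t := by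
    intro y hy
    filter_upwards [isOpen_Ioi.mem_nhds (show y ∈ Ioi (0:ℝ) from hy)] with t ht
    exact hD t ht
  have hd2 : ∀ y : ℝ, 0 < y → DifferentiableAt ℝ (deriv h) y := fun y hy =>
    ((hg2 y hy).sub (hdφ1 y hy).differentiableAt).congr_of_eventuallyEq (hev y hy)
  have hodeh : ∀ y : ℝ, 0 < y → deriv (deriv h) y = ((12 / y ^ 2 + c2 : ℝ) : ℂ) * h y := by
    intro y hy
    rw [(hev y hy).deriv_eq,
      deriv_fun_sub (hg2 y hy) (hdφ1 y hy).differentiableAt, (hdφ1 y hy).deriv, hode y hy]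
    simp only [hφ2, hφ, hh]
    rw [huo y hy, hvo y hy]
    push_cast
    ring
  have hφval : φ 1 = g 1 ∧ φ1 1 = deriv g 1 := by
    constructor
    · show A * (u 1 : ℂ) + B * (v 1 : ℂ) = g 1
      rw [hA, hB, div_mul_eq_mul_div, div_mul_eq_mul_div, ← add_div, div_eq_iff hWC]
      push_cast
      ring
    · show A * (u1 1 : ℂ) + B * (v1 1 : ℂ) = deriv g 1
      rw [hA, hB, div_mul_eq_mul_div, div_mul_eq_mul_div, ← add_div, div_eq_iff hWC]
      push_cast
      ring
  have h1 : h 1 = 0 := by rw [hh]; simp [hφval.1]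
  have h1' : deriv h 1 = 0 := by rw [hD 1 one_pos, hφval.2, sub_self]
  have hvan := vanish c2 hc2 h hd1 hd2 hodeh h1 h1'
  refine ⟨(A, B), ?_, ?_⟩
  · intro y hy
    have := hvan y hy
    rw [hh] at this
    simp only [hφ] at this
    have : g y = A * (u y : ℂ) + B * (v y : ℂ) := by linear_combination this
    exact this
  · rintro ⟨a', b'⟩ hab'
    have hrep : ∀ y : ℝ, 0 < y → g y = A * (u y : ℂ) + B * (v y : ℂ) := by
      intro y hy
      have := hvan y hy
      rw [hh] at this
      simp only [hφ] at this
      linear_combination this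
    set ψ : ℝ → ℂ := fun y => (a' - A) * (u y : ℂ) + (b' - B) * (v y : ℂ) with hψ
    have hψ0 : ∀ y : ℝ, 0 < y → ψ y = 0 := by
      intro y hy
      have e1 := hab' y hy
      have e2 := hrep y hy
      show (a' - A) * (u y : ℂ) + (b' - B) * (v y : ℂ) = 0
      linear_combination e2 - e1
    have hψd : HasDerivAt ψ ((a' - A) * (u1 1 : ℂ) + (b' - B) * (v1 1 : ℂ)) 1 :=
      (((hu 1 one_pos).ofReal_comp).const_mul _).add (((hv 1 one_pos).ofReal_comp).const_mul _)
    have hψev : ψ =ᶠ[nhds 1] fun _ => (0 : ℂ) := by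
      filter_upwards [isOpen_Ioi.mem_nhds (Set.mem_Ioi.mpr one_pos)] with t ht
      exact hψ0 t ht
    have hder0 : (a' - A) * (u1 1 : ℂ) + (b' - B) * (v1 1 : ℂ) = 0 := by
      rw [← hψd.deriv, hψev.deriv_eq]
      simp
    have hval0 : (a' - A) * (u 1 : ℂ) + (b' - B) * (v 1 : ℂ) = 0 := hψ0 1 one_pos
    have hA0 : a' - A = 0 := by
      have key : (a' - A) * ((u 1 * v1 1 - u1 1 * v 1 : ℝ) : ℂ) = 0 := by
        push_cast
        linear_combination (v1 1 : ℂ) * hval0 - (v 1 : ℂ) * hder0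
      exact (mul_eq_zero.mp key).resolve_right hWC
    have hB0 : b' - B = 0 := by
      have key : (b' - B) * ((u 1 * v1 1 - u1 1 * v 1 : ℝ) : ℂ) = 0 := by
        push_cast
        linear_combination (u 1 : ℂ) * hder0 - (u1 1 : ℂ) * hval0
      exact (mul_eq_zero.mp key).resolve_right hWC
    have : a' = A := by linear_combination hA0
    have : b' = B := by linear_combination hB0
    simp only [Prod.mk.injEq]
    exact ⟨by linear_combination hA0, by linear_combination hB0⟩

/-- `√y·I_{7/2}(2π|n|y)` and `√y·K_{7/2}(2π|n|y)` solve the homogeneous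
mode equation, every solution is a unique linear combination of them (for `n ≠ 0`),
and for `n = 0` every solution of `y²g'' = 12g` is a unique combination `a y⁴ + b y⁻³`. -/
theorem homogeneous_solution_space (n : ℤ) (hn : n ≠ 0) :
    (∀ y : ℝ, 0 < y →
        y ^ 2 * deriv (deriv (fun t : ℝ => Real.sqrt t * I7half (2 * π * |(n : ℝ)| * t))) y =
          (12 + 4 * π ^ 2 * (n : ℝ) ^ 2 * y ^ 2) *
            (Real.sqrt y * I7half (2 * π * |(n : ℝ)| * y))) ∧
    (∀ y : ℝ, 0 < y →
        y ^ 2 * deriv (deriv (fun t : ℝ => Real.sqrt t * K7half (2 * π * |(n : ℝ)| * t))) y =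
          (12 + 4 * π ^ 2 * (n : ℝ) ^ 2 * y ^ 2) *
            (Real.sqrt y * K7half (2 * π * |(n : ℝ)| * y))) ∧
    (∀ g : ℝ → ℂ,
      (∀ y : ℝ, 0 < y → DifferentiableAt ℝ g y) →
      (∀ y : ℝ, 0 < y → DifferentiableAt ℝ (deriv g) y) →
      (∀ y : ℝ, 0 < y →
        (y : ℂ) ^ 2 * deriv (deriv g) y =
          (((12 : ℝ) + 4 * π ^ 2 * (n : ℝ) ^ 2 * y ^ 2 : ℝ) : ℂ) * g y) →
      ∃! ab : ℂ × ℂ, ∀ y : ℝ, 0 < y →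
        g y = ab.1 * (Real.sqrt y * I7half (2 * π * |(n : ℝ)| * y) : ℝ) +
              ab.2 * (Real.sqrt y * K7half (2 * π * |(n : ℝ)| * y) : ℝ)) ∧
    (∀ g : ℝ → ℂ,
      (∀ y : ℝ, 0 < y → DifferentiableAt ℝ g y) →
      (∀ y : ℝ, 0 < y → DifferentiableAt ℝ (deriv g) y) →
      (∀ y : ℝ, 0 < y → (y : ℂ) ^ 2 * deriv (deriv g) y = 12 * g y) →
      ∃! ab : ℂ × ℂ, ∀ y : ℝ, 0 < y →
        g y = ab.1 * (y : ℂ) ^ 4 + ab.2 * (y : ℂ) ^ (-3 : ℤ)) := by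
  have hπ : 0 < π := Real.pi_pos
  have hnR : |(n : ℝ)| ≠ 0 := by
    simp only [ne_eq, abs_eq_zero, Int.cast_eq_zero]; exact hn
  obtain ⟨c, hc_def⟩ : ∃ c : ℝ, c = 2 * π * |(n : ℝ)| := ⟨_, rfl⟩
  simp only [← hc_def]
  have hc : 0 < c := by
    rw [hc_def]
    have : 0 < |(n : ℝ)| := (abs_nonneg _).lt_of_ne (Ne.symm hnR)
    positivity
  have hc2eq : c ^ 2 = 4 * π ^ 2 * (n : ℝ) ^ 2 := by
    rw [hc_def, mul_pow, mul_pow, sq_abs]; ring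
  -- constants
  obtain ⟨kI, hkI_def⟩ : ∃ z : ℝ, z = (Real.sqrt (2 * π * c))⁻¹ := ⟨_, rfl⟩
  obtain ⟨kK, hkK_def⟩ : ∃ z : ℝ, z = Real.sqrt (π / (2 * c)) := ⟨_, rfl⟩
  have hkI : 0 < kI := by
    rw [hkI_def]
    exact inv_pos.mpr (Real.sqrt_pos.mpr (by positivity))
  have hkK : 0 < kK := by
    rw [hkK_def]
    exact Real.sqrt_pos.mpr (by positivity)
  -- pointwise identities
  have eqI : ∀ t : ℝ, 0 < t →
      Real.sqrt t * I7half (c * t) = kI * (Gp (-c) t + Gp c t) := by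
    intro t ht
    have hst : Real.sqrt t ≠ 0 := ne_of_gt (Real.sqrt_pos.mpr ht)
    have hsc : Real.sqrt (2 * π * c) ≠ 0 := ne_of_gt (Real.sqrt_pos.mpr (by positivity))
    unfold I7half Gp
    have e1 : 2 * π * (c * t) = (2 * π * c) * t := by ring
    rw [e1, Real.sqrt_mul (by positivity) t]
    have e2 : -c * t = -(c * t) := by ring
    rw [e2, neg_neg, hkI_def]
    field_simp
  have eqK : ∀ t : ℝ, 0 < t →
      Real.sqrt t * K7half (c * t) = kK * Gp c t := by
    intro t ht
    have hst : Real.sqrt t ≠ 0 := ne_of_gt (Real.sqrt_pos.mpr ht)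
    unfold K7half Gp
    have e1 : π / (2 * (c * t)) = (π / (2 * c)) / t := by
      rw [div_div]; congr 1; ring
    rw [e1, Real.sqrt_div (by positivity) t, hkK_def]
    field_simp
  -- derivative data
  set u1 : ℝ → ℝ := fun t => kI * (Gp1 (-c) t + Gp1 c t) with hu1_def
  set u2 : ℝ → ℝ := fun t => kI * (Gp2 (-c) t + Gp2 c t) with hu2_def
  set v1 : ℝ → ℝ := fun t => kK * Gp1 c t with hv1_def
  set v2 : ℝ → ℝ := fun t => kK * Gp2 c t with hv2_def
  have hcne : c ≠ 0 := ne_of_gt hc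
  have hmemI : ∀ y : ℝ, 0 < y →
      (fun t : ℝ => Real.sqrt t * I7half (c * t)) =ᶠ[nhds y]
        fun t => kI * (Gp (-c) t + Gp c t) := by
    intro y hy
    filter_upwards [isOpen_Ioi.mem_nhds (Set.mem_Ioi.mpr hy)] with t ht
    exact eqI t ht
  have hmemK : ∀ y : ℝ, 0 < y →
      (fun t : ℝ => Real.sqrt t * K7half (c * t)) =ᶠ[nhds y] fun t => kK * Gp c t := by
    intro y hy
    filter_upwards [isOpen_Ioi.mem_nhds (Set.mem_Ioi.mpr hy)] with t ht
    exact eqK t ht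
  have hu : ∀ y : ℝ, 0 < y →
      HasDerivAt (fun t : ℝ => Real.sqrt t * I7half (c * t)) (u1 y) y := by
    intro y hy
    have h1 : HasDerivAt (fun t => kI * (Gp (-c) t + Gp c t)) (u1 y) y :=
      ((hasDerivAt_Gp (by simp [hcne, ne_of_gt hy] : -c * y ≠ 0)).add
        (hasDerivAt_Gp (mul_ne_zero hcne (ne_of_gt hy)))).const_mul kI
    exact h1.congr_of_eventuallyEq (hmemI y hy)
  have hv : ∀ y : ℝ, 0 < y →
      HasDerivAt (fun t : ℝ => Real.sqrt t * K7half (c * t)) (v1 y) y := by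
    intro y hy
    have h1 : HasDerivAt (fun t => kK * Gp c t) (v1 y) y :=
      (hasDerivAt_Gp (mul_ne_zero hcne (ne_of_gt hy))).const_mul kK
    exact h1.congr_of_eventuallyEq (hmemK y hy)
  have hu1 : ∀ y : ℝ, 0 < y → HasDerivAt u1 (u2 y) y := by
    intro y hy
    exact ((hasDerivAt_Gp1 (by simp [hcne, ne_of_gt hy] : -c * y ≠ 0)).add
      (hasDerivAt_Gp1 (mul_ne_zero hcne (ne_of_gt hy)))).const_mul kI
  have hv1 : ∀ y : ℝ, 0 < y → HasDerivAt v1 (v2 y) y := by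
    intro y hy
    exact (hasDerivAt_Gp1 (mul_ne_zero hcne (ne_of_gt hy))).const_mul kK
  have hode2 : ∀ y : ℝ, 0 < y → Gp2 c y = (12 / y ^ 2 + c ^ 2) * Gp c y :=
    fun y hy => Gp_ode hcne (ne_of_gt hy)
  have hode2' : ∀ y : ℝ, 0 < y → Gp2 (-c) y = (12 / y ^ 2 + c ^ 2) * Gp (-c) y := by
    intro y hy
    have := Gp_ode (neg_ne_zero.mpr hcne) (ne_of_gt hy)
    rwa [neg_sq] at this
  have huo : ∀ y : ℝ, 0 < y →
      u2 y = (12 / y ^ 2 + c ^ 2) * (Real.sqrt y * I7half (c * y)) := by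
    intro y hy
    rw [eqI y hy]
    simp only [hu2_def]
    rw [hode2 y hy, hode2' y hy]
    ring
  have hvo : ∀ y : ℝ, 0 < y →
      v2 y = (12 / y ^ 2 + c ^ 2) * (Real.sqrt y * K7half (c * y)) := by
    intro y hy
    rw [eqK y hy]
    simp only [hv2_def]
    rw [hode2 y hy]
    ring
  refine ⟨?_, ?_, ?_, ?_⟩
  · -- conjunct 1 : I equation
    intro y hy
    have hD1 : deriv (fun t : ℝ => Real.sqrt t * I7half (c * t)) =ᶠ[nhds y] u1 := by
      filter_upwards [isOpen_Ioi.mem_nhds (Set.mem_Ioi.mpr hy)] with t ht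
      exact (hu t ht).deriv
    have hD2 : deriv (deriv (fun t : ℝ => Real.sqrt t * I7half (c * t))) y = u2 y := by
      rw [hD1.deriv_eq, (hu1 y hy).deriv]
    rw [hD2, huo y hy, ← hc2eq]
    field_simp
  · -- conjunct 2 : K equation
    intro y hy
    have hD1 : deriv (fun t : ℝ => Real.sqrt t * K7half (c * t)) =ᶠ[nhds y] v1 := by
      filter_upwards [isOpen_Ioi.mem_nhds (Set.mem_Ioi.mpr hy)] with t ht
      exact (hv t ht).deriv
    have hD2 : deriv (deriv (fun t : ℝ => Real.sqrt t * K7half (c * t))) y = v2 y := by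
      rw [hD1.deriv_eq, (hv1 y hy).deriv]
    rw [hD2, hvo y hy, ← hc2eq]
    field_simp
  · -- conjunct 3
    intro g hg1 hg2 hg3
    have hW : (Real.sqrt 1 * I7half (c * 1)) * v1 1
        - u1 1 * (Real.sqrt 1 * K7half (c * 1)) ≠ 0 := by
      rw [eqI 1 one_pos, eqK 1 one_pos]
      have hwr := Gp_wron hcne (one_ne_zero : (1:ℝ) ≠ 0)
      have : kI * (Gp (-c) 1 + Gp c 1) * (kK * Gp1 c 1)
          - kI * (Gp1 (-c) 1 + Gp1 c 1) * (kK * Gp c 1) = kI * kK * -(2 * c) := by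
        linear_combination kI * kK * hwr
      simp only [hu1_def, hv1_def]
      rw [this]
      have hpos : 0 < kI * kK * (2 * c) :=
        mul_pos (mul_pos hkI hkK) (by linarith)
      have : kI * kK * -(2 * c) < 0 := by linarith [hpos]
      exact ne_of_lt (by linarith [hpos] : kI * kK * -(2 * c) < 0)
    have hodeg : ∀ y : ℝ, 0 < y →
        deriv (deriv g) y = ((12 / y ^ 2 + c ^ 2 : ℝ) : ℂ) * g y := by
      intro y hy
      have hy2 : ((y:ℝ):ℂ) ^ 2 ≠ 0 := pow_ne_zero 2 (Complex.ofReal_ne_zero.mpr (ne_of_gt hy))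
      have h3 := hg3 y hy
      have hyy : ((y:ℝ):ℂ) ≠ 0 := Complex.ofReal_ne_zero.mpr (ne_of_gt hy)
      have hcoe : (((12 : ℝ) + 4 * π ^ 2 * (n:ℝ) ^ 2 * y ^ 2 : ℝ) : ℂ)
          = ((12 / y ^ 2 + c ^ 2 : ℝ) : ℂ) * ((y:ℝ):ℂ) ^ 2 := by
        rw [show ((12 : ℝ) + 4 * π ^ 2 * (n:ℝ) ^ 2 * y ^ 2 : ℝ)
            = 12 + c ^ 2 * y ^ 2 by rw [hc2eq]]
        push_cast
        field_simp
      refine mul_left_cancel₀ hy2 ?_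
      rw [h3, hcoe]
      ring
    exact rep (c ^ 2) (sq_nonneg c)
      (fun t => Real.sqrt t * I7half (c * t)) (fun t => Real.sqrt t * K7half (c * t))
      u1 v1 u2 v2 hu hu1 hv hv1 huo hvo hW g hg1 hg2 hodeg
  · -- conjunct 4
    intro g hg1 hg2 hg3
    have hu' : ∀ y : ℝ, 0 < y → HasDerivAt (fun t : ℝ => t ^ 4) (4 * y ^ 3) y := by
      intro y hy
      simpa using hasDerivAt_pow 4 y
    have hu1' : ∀ y : ℝ, 0 < y → HasDerivAt (fun t : ℝ => 4 * t ^ 3) (12 * y ^ 2) y := by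
      intro y hy
      have h := (hasDerivAt_pow 3 y).const_mul (4:ℝ)
      have e : (4:ℝ) * (((3:ℕ):ℝ) * y ^ (3-1)) = 12 * y ^ 2 := by push_cast; ring
      rw [← e]; exact h
    have hv' : ∀ y : ℝ, 0 < y → HasDerivAt (fun t : ℝ => (t ^ 3)⁻¹) (-3 / y ^ 4) y := by
      intro y hy
      have h := (hasDerivAt_pow 3 y).inv (pow_ne_zero 3 (ne_of_gt hy))
      have hy' : y ≠ 0 := ne_of_gt hy
      have e : -(((3:ℕ):ℝ) * y ^ (3-1)) / (y ^ 3) ^ 2 = -3 / y ^ 4 := by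
        field_simp; ring
      rw [← e]; exact h
    have hv1' : ∀ y : ℝ, 0 < y → HasDerivAt (fun t : ℝ => -3 / t ^ 4) (12 / y ^ 5) y := by
      intro y hy
      have h := (hasDerivAt_const y (-3:ℝ)).div (hasDerivAt_pow 4 y) (pow_ne_zero 4 (ne_of_gt hy))
      have hy' : y ≠ 0 := ne_of_gt hy
      have e : (0 * y ^ 4 - -3 * (((4:ℕ):ℝ) * y ^ (4-1))) / (y ^ 4) ^ 2 = 12 / y ^ 5 := by
        field_simp; ring
      rw [← e]; exact h
    have huo' : ∀ y : ℝ, 0 < y → 12 * y ^ 2 = (12 / y ^ 2 + 0) * y ^ 4 := by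
      intro y hy
      have : y ≠ 0 := ne_of_gt hy
      field_simp
      ring
    have hvo' : ∀ y : ℝ, 0 < y → 12 / y ^ 5 = (12 / y ^ 2 + 0) * (y ^ 3)⁻¹ := by
      intro y hy
      have : y ≠ 0 := ne_of_gt hy
      field_simp
      ring
    have hW' : (1:ℝ) ^ 4 * (-3 / (1:ℝ) ^ 4) - 4 * (1:ℝ) ^ 3 * ((1:ℝ) ^ 3)⁻¹ ≠ 0 := by
      norm_num
    have hodeg : ∀ y : ℝ, 0 < y →
        deriv (deriv g) y = ((12 / y ^ 2 + 0 : ℝ) : ℂ) * g y := by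
      intro y hy
      have hyy : ((y:ℝ):ℂ) ≠ 0 := Complex.ofReal_ne_zero.mpr (ne_of_gt hy)
      have hy2 : ((y:ℝ):ℂ) ^ 2 ≠ 0 := pow_ne_zero 2 hyy
      have h3 := hg3 y hy
      have hcoe : ((12 / y ^ 2 + 0 : ℝ) : ℂ) * ((y:ℝ):ℂ) ^ 2 = 12 := by
        push_cast
        field_simp
        ring
      apply mul_left_cancel₀ hy2
      rw [h3, ← hcoe]
      ring
    have hrep := rep 0 le_rfl (fun t : ℝ => t ^ 4) (fun t : ℝ => (t ^ 3)⁻¹)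
      (fun t : ℝ => 4 * t ^ 3) (fun t : ℝ => -3 / t ^ 4)
      (fun t : ℝ => 12 * t ^ 2) (fun t : ℝ => 12 / t ^ 5)
      hu' hu1' hv' hv1' huo' hvo' hW' g hg1 hg2 hodeg
    have key : ∀ (ab : ℂ × ℂ) (y : ℝ), 0 < y →
        ab.1 * ((y ^ 4 : ℝ) : ℂ) + ab.2 * (((y ^ 3)⁻¹ : ℝ) : ℂ)
          = ab.1 * (y : ℂ) ^ 4 + ab.2 * (y : ℂ) ^ (-3 : ℤ) := by
      intro ab y hy
      have : ((y:ℝ):ℂ) ^ (-3 : ℤ) = (((y:ℝ):ℂ) ^ 3)⁻¹ := by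
        rw [zpow_neg, show ((3:ℤ)) = ((3:ℕ):ℤ) from rfl, zpow_natCast]
      rw [this]
      push_cast
      ring
    obtain ⟨ab, h1, h2⟩ := hrep
    refine ⟨ab, fun y hy => (h1 y hy).trans (key ab y hy), fun ab' hab' =>
      h2 ab' (fun y hy => (hab' y hy).trans (key ab' y hy).symm)⟩
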